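/- arXiv:2203.06334 — 2 statements merged into one kernel-verified Lean document; each statement's English description precedes it below -/
import Mathlib

section
/- (Warnock's formula for the L₂ discrepancy.) Let s ≥ 1, n ≥ 1, and let P = (x_1, …, x_n) be points in [0,1]^s with x_i = (x_{i1},…,x_{is}). Then the squared L₂ discrepancy satisfies ∫_{[0,1]^s} ( N(P, [0,x))/n − ∏_{l=1}^s x_l )² dx = 3^{−s} − (2^{1−s}/n)·Σ_{i=1}^n ∏_{l=1}^s (1 − x_{il}²) + (1/n²)·Σ_{i=1}^n Σ_{j=1}^n ∏_{l=1}^s (1 − max(x_{il}, x_{jl})), where N(P, [0,x)) is the number of indices i with x_{il} < x_l for every l = 1,…,s. -/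
open MeasureTheory

private theorem integral_pi_fin_prod (μ : Measure ℝ) [SigmaFinite μ] :
    ∀ (m : ℕ) (f : Fin m → ℝ → ℝ),
    ∫ x : Fin m → ℝ, ∏ i, f i (x i) ∂(Measure.pi fun _ => μ) = ∏ i, ∫ t, f i t ∂μ := by
  intro m
  induction m with
  | zero => intro f; simp [measureReal_def, Measure.pi_univ]
  | succ m ih =>
    intro f
    have h := (measurePreserving_piFinSuccAbove (fun _ : Fin (m+1) => μ) 0).symm
    rw [← h.integral_comp']
    have key : ∀ z : ℝ × (Fin m → ℝ),
        (∏ i, f i ((MeasurableEquiv.piFinSuccAbove (fun _ => ℝ) 0).symm z i))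
          = f 0 z.1 * ∏ i : Fin m, f i.succ (z.2 i) := by
      intro z
      simp [MeasurableEquiv.piFinSuccAbove_symm_apply, Fin.insertNthEquiv,
        Fin.prod_univ_succ, Fin.insertNth_zero, Fin.cons_succ,
        Fin.zero_succAbove, Fin.cons_zero]
    simp only [key]
    rw [integral_prod_mul (f := f 0) (g := fun y : Fin m → ℝ => ∏ i : Fin m, f i.succ (y i)),
      ih, Fin.prod_univ_succ]

private theorem integrable_pi_fin_prod (μ : Measure ℝ) [IsProbabilityMeasure μ] :
    ∀ (m : ℕ) (f : Fin m → ℝ → ℝ), (∀ i, Integrable (f i) μ) →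
    Integrable (fun x : Fin m → ℝ => ∏ i, f i (x i)) (Measure.pi fun _ => μ) := by
  intro m
  induction m with
  | zero => intro f _; simpa using integrable_const (1:ℝ)
  | succ m ih =>
    intro f hf
    have h := (measurePreserving_piFinSuccAbove (fun _ : Fin (m+1) => μ) 0).symm
    rw [← h.integrable_comp_emb (MeasurableEquiv.piFinSuccAbove _ 0).symm.measurableEmbedding]
    have : ((fun x : Fin (m+1) → ℝ => ∏ i, f i (x i)) ∘ (MeasurableEquiv.piFinSuccAbove (fun _ => ℝ) 0).symm)
        = fun z : ℝ × (Fin m → ℝ) => f 0 z.1 * ∏ i : Fin m, f i.succ (z.2 i) := by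
      ext z
      simp [MeasurableEquiv.piFinSuccAbove_symm_apply, Fin.insertNthEquiv,
        Fin.prod_univ_succ, Fin.insertNth_zero, Fin.cons_succ,
        Fin.zero_succAbove, Fin.cons_zero]
    rw [this]
    exact (hf 0).mul_prod (ih _ fun i => hf _)

private instance : IsProbabilityMeasure (volume.restrict (Set.Icc (0:ℝ) 1)) := by
  constructor
  rw [Measure.restrict_apply_univ, Real.volume_Icc]
  norm_num

private theorem ioi_inter {a : ℝ} (ha : a ∈ Set.Icc (0:ℝ) 1) :
    Set.Ioi a ∩ Set.Icc (0:ℝ) 1 = Set.Ioc a 1 := by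
  ext t
  simp only [Set.mem_inter_iff, Set.mem_Ioi, Set.mem_Icc, Set.mem_Ioc]
  constructor
  · rintro ⟨h1, _, h3⟩; exact ⟨h1, h3⟩
  · rintro ⟨h1, h2⟩; exact ⟨h1, le_trans ha.1 h1.le, h2⟩

private theorem int_sq : ∫ t, t ^ 2 ∂(volume.restrict (Set.Icc (0:ℝ) 1)) = 1 / 3 := by
  rw [show ∫ t in Set.Icc (0:ℝ) 1, t ^ 2 = ∫ t in Set.Ioc (0:ℝ) 1, t ^ 2 from
    integral_Icc_eq_integral_Ioc]
  rw [← intervalIntegral.integral_of_le (by norm_num : (0:ℝ) ≤ 1)]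
  rw [integral_pow]
  norm_num

private theorem int_ind_mul {a : ℝ} (ha : a ∈ Set.Icc (0:ℝ) 1) :
    ∫ t, (if a < t then (1:ℝ) else 0) * t ∂(volume.restrict (Set.Icc (0:ℝ) 1))
      = (1 - a ^ 2) / 2 := by
  have h1 : (fun t : ℝ => (if a < t then (1:ℝ) else 0) * t)
      = (Set.Ioi a).indicator (fun t => t) := by
    ext t; simp [Set.indicator_apply, Set.mem_Ioi, ite_mul]
  rw [h1, integral_indicator measurableSet_Ioi,
    Measure.restrict_restrict measurableSet_Ioi, ioi_inter ha]
  rw [← intervalIntegral.integral_of_le ha.2]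
  rw [integral_id]
  ring

private theorem int_ind {a : ℝ} (ha : a ∈ Set.Icc (0:ℝ) 1) :
    ∫ t, (if a < t then (1:ℝ) else 0) ∂(volume.restrict (Set.Icc (0:ℝ) 1)) = 1 - a := by
  have h1 : (fun t : ℝ => (if a < t then (1:ℝ) else 0))
      = (Set.Ioi a).indicator (fun _ => (1:ℝ)) := by
    ext t; simp [Set.indicator_apply]
  rw [h1, integral_indicator_const _ measurableSet_Ioi, measureReal_def,
    Measure.restrict_apply measurableSet_Ioi, ioi_inter ha, Real.volume_Ioc]
  rw [ENNReal.toReal_ofReal (by linarith [ha.2])]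
  simp

private theorem int_ind_ind {a b : ℝ} (ha : a ∈ Set.Icc (0:ℝ) 1) (hb : b ∈ Set.Icc (0:ℝ) 1) :
    ∫ t, (if a < t then (1:ℝ) else 0) * (if b < t then (1:ℝ) else 0)
      ∂(volume.restrict (Set.Icc (0:ℝ) 1)) = 1 - max a b := by
  have h1 : ∀ t : ℝ, (if a < t then (1:ℝ) else 0) * (if b < t then (1:ℝ) else 0)
      = (if max a b < t then (1:ℝ) else 0) := by
    intro t
    by_cases h1 : a < t <;> by_cases h2 : b < t <;>
      simp [h1, h2, max_lt_iff]
  simp only [h1]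
  exact int_ind (Set.mem_Icc.mpr ⟨le_trans ha.1 (le_max_left a b), max_le ha.2 hb.2⟩)

private theorem integrable_sq : Integrable (fun t : ℝ => t ^ 2)
    (volume.restrict (Set.Icc (0:ℝ) 1)) :=
  (continuous_pow 2).integrableOn_Icc

private theorem integrable_ind (a : ℝ) :
    Integrable (fun t : ℝ => if a < t then (1:ℝ) else 0)
      (volume.restrict (Set.Icc (0:ℝ) 1)) := by
  have h1 : (fun t : ℝ => (if a < t then (1:ℝ) else 0))
      = (Set.Ioi a).indicator (fun _ => (1:ℝ)) := by
    ext t; simp [Set.indicator_apply]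
  rw [h1]
  exact (integrable_const 1).indicator measurableSet_Ioi

private theorem integrable_ind_mul (a : ℝ) :
    Integrable (fun t : ℝ => (if a < t then (1:ℝ) else 0) * t)
      (volume.restrict (Set.Icc (0:ℝ) 1)) := by
  have h1 : (fun t : ℝ => (if a < t then (1:ℝ) else 0) * t)
      = (Set.Ioi a).indicator (fun t => t) := by
    ext t; simp [Set.indicator_apply, ite_mul]
  rw [h1]
  exact (continuous_id.integrableOn_Icc : IntegrableOn _ _ _).indicator measurableSet_Ioi

private theorem integrable_ind_ind (a b : ℝ) :
    Integrable (fun t : ℝ => (if a < t then (1:ℝ) else 0) * (if b < t then (1:ℝ) else 0))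
      (volume.restrict (Set.Icc (0:ℝ) 1)) := by
  refine (integrable_ind b).bdd_mul (c := 1) ?_ (Filter.Eventually.of_forall fun t => ?_)
  · exact (integrable_ind a).1
  · split <;> simp

open scoped Classical in
/-- **Warnock's formula** for the squared `L₂` discrepancy of `n` points in `[0,1]^s`. -/
theorem warnock_formula (s n : ℕ) (hs : 1 ≤ s) (hn : 1 ≤ n)
    (P : Fin n → Fin s → ℝ) (hP : ∀ i l, P i l ∈ Set.Icc (0 : ℝ) 1) :
    (∫ x : Fin s → ℝ,
        (((Finset.univ.filter fun i => ∀ l, P i l < x l).card : ℝ) / n - ∏ l, x l) ^ 2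
        ∂(Measure.pi fun _ : Fin s => volume.restrict (Set.Icc (0 : ℝ) 1)))
      = ((3 : ℝ) ^ s)⁻¹
        - (2 : ℝ) ^ (1 - (s : ℤ)) / n * ∑ i, ∏ l, (1 - P i l ^ 2)
        + 1 / (n : ℝ) ^ 2 * ∑ i, ∑ j, ∏ l, (1 - max (P i l) (P j l)) := by
  have hn0 : (n:ℝ) ≠ 0 := Nat.cast_ne_zero.mpr (by omega)
  set μ : Measure ℝ := volume.restrict (Set.Icc (0:ℝ) 1) with hμ
  set π : Measure (Fin s → ℝ) := Measure.pi fun _ : Fin s => μ with hπ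
  -- pointwise expansion of the square
  have key : ∀ x : Fin s → ℝ,
      (((Finset.univ.filter fun i => ∀ l, P i l < x l).card : ℝ) / n - ∏ l, x l) ^ 2
        = (1 / (n:ℝ)^2) * ∑ i : Fin n, ∑ j : Fin n,
              ∏ l, ((if P i l < x l then (1:ℝ) else 0) * (if P j l < x l then (1:ℝ) else 0))
          - (2 / (n:ℝ)) * ∑ i : Fin n, ∏ l, ((if P i l < x l then (1:ℝ) else 0) * x l)
          + ∏ l, (x l) ^ 2 := by
    intro x
    have hcard : ((Finset.univ.filter fun i => ∀ l, P i l < x l).card : ℝ)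
        = ∑ i : Fin n, ∏ l, (if P i l < x l then (1:ℝ) else 0) := by
      rw [Finset.card_filter]
      push_cast
      refine Finset.sum_congr rfl fun i _ => ?_
      rw [Finset.prod_boole]
      simp
    simp only [Finset.prod_mul_distrib, Finset.prod_pow, hcard,
      ← Finset.sum_mul_sum, ← Finset.sum_mul]
    field_simp
    ring
  simp only [key]
  -- integrability
  have I1 : ∀ i j : Fin n, Integrable (fun x : Fin s → ℝ =>
      ∏ l, ((if P i l < x l then (1:ℝ) else 0) * (if P j l < x l then (1:ℝ) else 0))) π :=
    fun i j => integrable_pi_fin_prod μ s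
      (fun l t => (if P i l < t then (1:ℝ) else 0) * (if P j l < t then (1:ℝ) else 0))
      (fun l => integrable_ind_ind _ _)
  have I2 : ∀ i : Fin n, Integrable (fun x : Fin s → ℝ =>
      ∏ l, ((if P i l < x l then (1:ℝ) else 0) * x l)) π :=
    fun i => integrable_pi_fin_prod μ s
      (fun l t => (if P i l < t then (1:ℝ) else 0) * t)
      (fun l => integrable_ind_mul _)
  have I3 : Integrable (fun x : Fin s → ℝ => ∏ l, (x l) ^ 2) π :=
    integrable_pi_fin_prod μ s (fun _ t => t ^ 2) (fun _ => integrable_sq)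
  have hS1 : Integrable (fun x : Fin s → ℝ => ∑ i : Fin n, ∑ j : Fin n,
      ∏ l, ((if P i l < x l then (1:ℝ) else 0) * (if P j l < x l then (1:ℝ) else 0))) π :=
    integrable_finset_sum _ fun i _ => integrable_finset_sum _ fun j _ => I1 i j
  have hS2 : Integrable (fun x : Fin s → ℝ => ∑ i : Fin n,
      ∏ l, ((if P i l < x l then (1:ℝ) else 0) * x l)) π :=
    integrable_finset_sum _ fun i _ => I2 i
  have hA : Integrable (fun x : Fin s → ℝ => (1 / (n:ℝ)^2) * ∑ i : Fin n, ∑ j : Fin n,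
      ∏ l, ((if P i l < x l then (1:ℝ) else 0) * (if P j l < x l then (1:ℝ) else 0))) π :=
    hS1.const_mul _
  have hB : Integrable (fun x : Fin s → ℝ => (2 / (n:ℝ)) * ∑ i : Fin n,
      ∏ l, ((if P i l < x l then (1:ℝ) else 0) * x l)) π :=
    hS2.const_mul _
  have hAB : Integrable (fun x : Fin s → ℝ => (1 / (n:ℝ)^2) * (∑ i : Fin n, ∑ j : Fin n,
      ∏ l, ((if P i l < x l then (1:ℝ) else 0) * (if P j l < x l then (1:ℝ) else 0)))
      - (2 / (n:ℝ)) * ∑ i : Fin n, ∏ l, ((if P i l < x l then (1:ℝ) else 0) * x l)) π :=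
    hA.sub hB
  rw [integral_add hAB I3, integral_sub hA hB,
    integral_const_mul, integral_const_mul, integral_finset_sum _ fun i _ =>
      integrable_finset_sum _ fun j _ => I1 i j,
    integral_finset_sum _ fun i _ => I2 i]
  -- compute the three integrals
  have E1 : ∀ i j : Fin n, (∫ x : Fin s → ℝ,
      ∏ l, ((if P i l < x l then (1:ℝ) else 0) * (if P j l < x l then (1:ℝ) else 0)) ∂π)
        = ∏ l, (1 - max (P i l) (P j l)) := fun i j =>
    (integral_pi_fin_prod μ s
      (fun l t => (if P i l < t then (1:ℝ) else 0) * (if P j l < t then (1:ℝ) else 0))).trans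
      (Finset.prod_congr rfl fun l _ => int_ind_ind (hP i l) (hP j l))
  have E2 : ∀ i : Fin n, (∫ x : Fin s → ℝ,
      ∏ l, ((if P i l < x l then (1:ℝ) else 0) * x l) ∂π)
        = ∏ l, ((1 - P i l ^ 2) / 2) := fun i =>
    (integral_pi_fin_prod μ s (fun l t => (if P i l < t then (1:ℝ) else 0) * t)).trans
      (Finset.prod_congr rfl fun l _ => int_ind_mul (hP i l))
  have E3 : (∫ x : Fin s → ℝ, ∏ l, (x l) ^ 2 ∂π) = ((3:ℝ) ^ s)⁻¹ := by
    rw [(integral_pi_fin_prod μ s (fun _ t => t ^ 2)).trans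
      (Finset.prod_congr rfl fun l _ => int_sq)]
    rw [Finset.prod_const, Finset.card_univ, Fintype.card_fin, one_div, inv_pow]
  simp only [E3]
  rw [Finset.sum_congr rfl fun i _ => (integral_finset_sum _ fun j _ => I1 i j).trans
      (Finset.sum_congr rfl fun j _ => E1 i j),
    Finset.sum_congr rfl fun i _ => E2 i]
  -- final algebra
  have h2s : ∀ i : Fin n, ∏ l, ((1 - P i l ^ 2) / 2)
      = (∏ l, (1 - P i l ^ 2)) / 2 ^ s := by
    intro i
    rw [Finset.prod_div_distrib, Finset.prod_const, Finset.card_univ, Fintype.card_fin]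
  simp only [h2s]
  rw [show ((2:ℝ) ^ (1 - (s:ℤ))) = 2 / 2 ^ s by
    rw [zpow_sub₀ (two_ne_zero), zpow_one, zpow_natCast]]
  rw [← Finset.sum_div]
  have h2pow : (2:ℝ) ^ s ≠ 0 := pow_ne_zero _ two_ne_zero
  field_simp
  ring
end

section
/- (Closed form of the centered L₂ discrepancy.) Let s ≥ 1, n ≥ 1, and let P = (x_1,…,x_n) be points in [0,1]^s with x_i = (x_{i1},…,x_{is}). For x ∈ [0,1]^s let a(x) ∈ {0,1}^s be the vertex of the unit cube nearest to x (a_l = 1 if x_l > 1/2 and a_l = 0 if x_l ≤ 1/2), and for a nonempty u ⊆ {1,…,s} let J^u_x = ∏_{l∈u} [min(a_l, x_l), max(a_l, x_l)]. Then Σ_{∅ ≠ u ⊆ {1,…,s}} ∫_{[0,1]^{|u|}} ( N_u(P, J^u_x)/n − ∏_{l∈u} |x_l − a_l| )² dx_u = (13/12)^s − (2/n)·Σ_{i=1}^n ∏_{l=1}^s ( 1 + ½|x_{il} − ½| − ½|x_{il} − ½|² ) + (1/n²)·Σ_{i=1}^n Σ_{j=1}^n ∏_{l=1}^s ( 1 +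 ½|x_{il} − ½| + ½|x_{jl} − ½| − ½|x_{il} − x_{jl}| ), where N_u(P, J^u_x) is the number of indices i whose u-coordinates satisfy x_{il} ∈ [min(a_l,x_l), max(a_l,x_l)] for every l ∈ u. -/
open MeasureTheory Set intervalIntegral

noncomputable def Jfun (p x : ℝ) : ℝ :=
  if x ≤ 1/2 then (if p ≤ x then 1 else 0) else (if x ≤ p then 1 else 0)
noncomputable def Wfun (x : ℝ) : ℝ := if x ≤ 1/2 then x else 1 - x

lemma measurable_Jfun (p : ℝ) : Measurable (Jfun p) := by
  unfold Jfun
  exact Measurable.ite measurableSet_Iic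
    (Measurable.ite (measurableSet_Ici) measurable_const measurable_const)
    (Measurable.ite (measurableSet_Iic) measurable_const measurable_const)

lemma measurable_Wfun : Measurable Wfun := by
  unfold Wfun
  exact Measurable.ite measurableSet_Iic measurable_id ((measurable_const).sub measurable_id)

lemma integrable_mu0 {f : ℝ → ℝ} (hf : Measurable f) (C : ℝ)
    (hC : ∀ x ∈ Icc (0:ℝ) 1, |f x| ≤ C) :
    Integrable f (volume.restrict (Icc (0:ℝ) 1)) := by
  refine Integrable.mono' (integrable_const C) hf.aestronglyMeasurable ?_
  filter_upwards [ae_restrict_mem measurableSet_Icc] with x hx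
  exact hC x hx

lemma split01 (f : ℝ → ℝ) (h1 : IntegrableOn f (Icc 0 (1/2)))
    (h2 : IntegrableOn f (Ioc (1/2) 1)) :
    ∫ x, f x ∂(volume.restrict (Icc (0:ℝ) 1))
      = (∫ x in Icc (0:ℝ) (1/2), f x) + ∫ x in Ioc (1/2:ℝ) 1, f x := by
  rw [← Set.Icc_union_Ioc_eq_Icc (by norm_num : (0:ℝ) ≤ 1/2) (by norm_num : (1/2:ℝ) ≤ 1)]
  exact setIntegral_union (((Set.Iic_disjoint_Ioc le_rfl).mono Set.Icc_subset_Iic_self le_rfl)) measurableSet_Ioc h1 h2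

lemma Jfun_abs_le (p x : ℝ) : |Jfun p x| ≤ 1 := by
  unfold Jfun; split_ifs <;> norm_num

lemma Wfun_abs_le {x : ℝ} (hx : x ∈ Icc (0:ℝ) 1) : |Wfun x| ≤ 1 := by
  unfold Wfun
  obtain ⟨h0, h1⟩ := hx
  split_ifs with h <;> rw [abs_le] <;> constructor <;> linarith

lemma integrableOn_bdd {f : ℝ → ℝ} (hf : Measurable f) {S : Set ℝ}
    (hS : MeasurableSet S) (hvol : volume S < ⊤) (C : ℝ) (h : ∀ x ∈ S, |f x| ≤ C) :
    IntegrableOn f S := by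
  refine Integrable.mono' (integrableOn_const (C:=C) hvol.ne) hf.aestronglyMeasurable ?_
  filter_upwards [ae_restrict_mem hS] with x hx using h x hx

lemma intIcc_id {a b : ℝ} (h : a ≤ b) : ∫ x in Icc a b, x = (b^2 - a^2)/2 := by
  rw [integral_Icc_eq_integral_Ioc, ← intervalIntegral.integral_of_le h]
  simpa using @intervalIntegral.integral_id a b

lemma intIcc_sq {a b : ℝ} (h : a ≤ b) : ∫ x in Icc a b, x^2 = (b^3 - a^3)/3 := by
  rw [integral_Icc_eq_integral_Ioc, ← intervalIntegral.integral_of_le h]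
  have := integral_pow (a := a) (b := b) (n := 2)
  rw [this]; norm_num

lemma intIoc_one_sub {a b : ℝ} (h : a ≤ b) :
    ∫ x in Ioc a b, (1 - x) = (b - b^2/2) - (a - a^2/2) := by
  rw [← intervalIntegral.integral_of_le h,
    integral_sub intervalIntegrable_const intervalIntegrable_id]
  simp [integral_id]
  ring

lemma intIoc_one_sub_pow {a b : ℝ} (h : a ≤ b) (n : ℕ) :
    ∫ x in Ioc a b, (1-x)^n = ((1-a)^(n+1) - (1-b)^(n+1))/(n+1) := by
  rw [← integral_of_le h, integral_comp_sub_left (fun x => x^n) 1, integral_pow]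

lemma vol_Icc_lt : volume (Icc (0:ℝ) (1/2)) < ⊤ := by
  rw [Real.volume_Icc]; exact ENNReal.ofReal_lt_top

lemma vol_Ioc_lt : volume (Ioc (1/2:ℝ) 1) < ⊤ := by
  rw [Real.volume_Ioc]; exact ENNReal.ofReal_lt_top

lemma intWW : ∫ x, Wfun x * Wfun x ∂(volume.restrict (Icc (0:ℝ) 1)) = 1/12 := by
  have hb1 : ∀ x ∈ Icc (0:ℝ) (1/2), |Wfun x * Wfun x| ≤ 1 := by
    intro x hx
    have hx' : x ∈ Icc (0:ℝ) 1 := ⟨hx.1, by linarith [hx.2]⟩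
    rw [abs_mul]
    exact mul_le_one₀ (Wfun_abs_le hx') (abs_nonneg _) (Wfun_abs_le hx')
  have hb2 : ∀ x ∈ Ioc (1/2:ℝ) 1, |Wfun x * Wfun x| ≤ 1 := by
    intro x hx
    have hx' : x ∈ Icc (0:ℝ) 1 := ⟨by linarith [hx.1], hx.2⟩
    rw [abs_mul]
    exact mul_le_one₀ (Wfun_abs_le hx') (abs_nonneg _) (Wfun_abs_le hx')
  rw [split01 (fun x => Wfun x * Wfun x) (integrableOn_bdd (measurable_Wfun.mul measurable_Wfun) measurableSet_Icc vol_Icc_lt 1 hb1)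
      (integrableOn_bdd (measurable_Wfun.mul measurable_Wfun) measurableSet_Ioc vol_Ioc_lt 1 hb2)]
  have e1 : ∫ x in Icc (0:ℝ) (1/2), Wfun x * Wfun x = ∫ x in Icc (0:ℝ) (1/2), x^2 := by
    refine setIntegral_congr_fun measurableSet_Icc fun x hx => ?_
    simp only [Wfun, sq]; rw [if_pos hx.2]
  have e2 : ∫ x in Ioc (1/2:ℝ) 1, Wfun x * Wfun x = ∫ x in Ioc (1/2:ℝ) 1, (1-x)^2 := by
    refine setIntegral_congr_fun measurableSet_Ioc fun x hx => ?_
    simp only [Wfun, sq]; rw [if_neg (not_le.2 hx.1)]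
  rw [e1, e2, intIcc_sq (by norm_num), intIoc_one_sub_pow (by norm_num)]
  norm_num

lemma intJW {p : ℝ} (hp : p ∈ Icc (0:ℝ) 1) :
    ∫ x, Jfun p x * Wfun x ∂(volume.restrict (Icc (0:ℝ) 1))
      = |p - 1/2|/2 - |p - 1/2|^2/2 := by
  obtain ⟨hp0, hp1⟩ := hp
  have hmeas : Measurable fun x => Jfun p x * Wfun x := (measurable_Jfun p).mul measurable_Wfun
  have hb1 : ∀ x ∈ Icc (0:ℝ) (1/2), |Jfun p x * Wfun x| ≤ 1 := by
    intro x hx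
    have hx' : x ∈ Icc (0:ℝ) 1 := ⟨hx.1, by linarith [hx.2]⟩
    rw [abs_mul]
    exact mul_le_one₀ (Jfun_abs_le p x) (abs_nonneg _) (Wfun_abs_le hx')
  have hb2 : ∀ x ∈ Ioc (1/2:ℝ) 1, |Jfun p x * Wfun x| ≤ 1 := by
    intro x hx
    have hx' : x ∈ Icc (0:ℝ) 1 := ⟨by linarith [hx.1], hx.2⟩
    rw [abs_mul]
    exact mul_le_one₀ (Jfun_abs_le p x) (abs_nonneg _) (Wfun_abs_le hx')
  rw [split01 _ (integrableOn_bdd hmeas measurableSet_Icc vol_Icc_lt 1 hb1)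
      (integrableOn_bdd hmeas measurableSet_Ioc vol_Ioc_lt 1 hb2)]
  have e1 : ∫ x in Icc (0:ℝ) (1/2), Jfun p x * Wfun x
      = ∫ x in Icc (0:ℝ) (1/2), (Icc p (1/2)).indicator id x := by
    refine setIntegral_congr_fun measurableSet_Icc fun x hx => ?_
    simp only [Jfun, Wfun, if_pos hx.2, indicator, mem_Icc, id]
    by_cases h : p ≤ x
    · rw [if_pos h, if_pos ⟨h, hx.2⟩, one_mul]
    · rw [if_neg h, if_neg (fun hh => h hh.1), zero_mul]
  have e2 : ∫ x in Ioc (1/2:ℝ) 1, Jfun p x * Wfun x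
      = ∫ x in Ioc (1/2:ℝ) 1, (Ioc (1/2) p).indicator (fun y => 1 - y) x := by
    refine setIntegral_congr_fun measurableSet_Ioc fun x hx => ?_
    simp only [Jfun, Wfun, if_neg (not_le.2 hx.1), indicator, mem_Ioc]
    by_cases h : x ≤ p
    · rw [if_pos h, if_pos ⟨hx.1, h⟩, one_mul]
    · rw [if_neg h, if_neg (fun hh => h hh.2), zero_mul]
  rw [e1, e2, setIntegral_indicator measurableSet_Icc, setIntegral_indicator measurableSet_Ioc,
    Icc_inter_Icc, Ioc_inter_Ioc]
  rw [sup_eq_right.2 hp0, inf_idem, sup_idem, inf_eq_right.2 hp1]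
  rcases le_or_gt p (1/2) with h | h
  · rw [Ioc_eq_empty (by simpa using h), Measure.restrict_empty, integral_zero_measure]
    simp only [id_eq]
    rw [intIcc_id h, abs_of_nonpos (by linarith)]
    ring
  · rw [Icc_eq_empty (by simpa using h), Measure.restrict_empty, integral_zero_measure]
    have : ∫ x in Ioc (1/2:ℝ) p, (1-x)^1 = ((1-(1/2:ℝ))^2 - (1-p)^2)/2 := by
      have := intIoc_one_sub_pow (a := (1/2:ℝ)) (b := p) h.le 1
      rw [this]; norm_num
    simp only [pow_one] at this
    rw [this, abs_of_nonneg (by linarith)]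
    ring

lemma intJJ {p q : ℝ} (hp : p ∈ Icc (0:ℝ) 1) (hq : q ∈ Icc (0:ℝ) 1) :
    ∫ x, Jfun p x * Jfun q x ∂(volume.restrict (Icc (0:ℝ) 1))
      = |p - 1/2|/2 + |q - 1/2|/2 - |p - q|/2 := by
  obtain ⟨hp0, hp1⟩ := hp
  obtain ⟨hq0, hq1⟩ := hq
  have hmeas : Measurable fun x => Jfun p x * Jfun q x := (measurable_Jfun p).mul (measurable_Jfun q)
  have hb : ∀ (S : Set ℝ), ∀ x ∈ S, |Jfun p x * Jfun q x| ≤ 1 := by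
    intro S x _
    rw [abs_mul]
    exact mul_le_one₀ (Jfun_abs_le p x) (abs_nonneg _) (Jfun_abs_le q x)
  rw [split01 _ (integrableOn_bdd hmeas measurableSet_Icc vol_Icc_lt 1 (hb _))
      (integrableOn_bdd hmeas measurableSet_Ioc vol_Ioc_lt 1 (hb _))]
  have e1 : ∫ x in Icc (0:ℝ) (1/2), Jfun p x * Jfun q x
      = ∫ x in Icc (0:ℝ) (1/2), (Icc (p ⊔ q) (1/2)).indicator (fun _ => (1:ℝ)) x := by
    refine setIntegral_congr_fun measurableSet_Icc fun x hx => ?_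
    simp only [Jfun, if_pos hx.2, indicator, mem_Icc, sup_le_iff]
    by_cases h1 : p ≤ x <;> by_cases h2 : q ≤ x <;>
      simp [h1, h2, show x ≤ 2⁻¹ by rw [← one_div]; exact hx.2]
  have e2 : ∫ x in Ioc (1/2:ℝ) 1, Jfun p x * Jfun q x
      = ∫ x in Ioc (1/2:ℝ) 1, (Ioc (1/2) (p ⊓ q)).indicator (fun _ => (1:ℝ)) x := by
    refine setIntegral_congr_fun measurableSet_Ioc fun x hx => ?_
    simp only [Jfun, if_neg (not_le.2 hx.1), indicator, mem_Ioc, le_inf_iff]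
    by_cases h1 : x ≤ p <;> by_cases h2 : x ≤ q <;>
      simp [h1, h2, show (2⁻¹:ℝ) < x by rw [← one_div]; exact hx.1]
  rw [e1, e2, setIntegral_indicator measurableSet_Icc, setIntegral_indicator measurableSet_Ioc,
    Icc_inter_Icc, Ioc_inter_Ioc]
  rw [sup_eq_right.2 (le_trans hp0 le_sup_left), inf_idem, sup_idem,
    inf_eq_right.2 (inf_le_left.trans hp1)]
  rw [setIntegral_const, setIntegral_const, smul_eq_mul, smul_eq_mul, mul_one, mul_one,
    measureReal_def, measureReal_def, Real.volume_Icc, Real.volume_Ioc]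
  have key : ∀ a b : ℝ, (ENNReal.ofReal (b - a)).toReal = if a ≤ b then b - a else 0 := by
    intro a b
    split_ifs with h
    · exact ENNReal.toReal_ofReal (by linarith)
    · rw [ENNReal.ofReal_eq_zero.2 (by linarith [not_le.1 h]), ENNReal.toReal_zero]
  rw [key, key]
  rcases le_total p q with hpq | hpq
  · rw [sup_eq_right.2 hpq, inf_eq_left.2 hpq, abs_of_nonpos (by linarith : p - q ≤ 0)]
    rcases le_total q (1/2) with h1 | h1
    · rw [abs_of_nonpos (by linarith : q - 1/2 ≤ 0), abs_of_nonpos (by linarith : p - 1/2 ≤ 0)]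
      split_ifs <;> linarith
    · rcases le_total p (1/2) with h2 | h2
      · rw [abs_of_nonneg (by linarith : (0:ℝ) ≤ q - 1/2), abs_of_nonpos (by linarith : p - 1/2 ≤ 0)]
        split_ifs <;> linarith
      · rw [abs_of_nonneg (by linarith : (0:ℝ) ≤ q - 1/2), abs_of_nonneg (by linarith : (0:ℝ) ≤ p - 1/2)]
        split_ifs <;> linarith
  · rw [sup_eq_left.2 hpq, inf_eq_right.2 hpq, abs_of_nonneg (by linarith : (0:ℝ) ≤ p - q)]
    rcases le_total p (1/2) with h1 | h1
    · rw [abs_of_nonpos (by linarith : q - 1/2 ≤ 0), abs_of_nonpos (by linarith : p - 1/2 ≤ 0)]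
      split_ifs <;> linarith
    · rcases le_total q (1/2) with h2 | h2
      · rw [abs_of_nonpos (by linarith : q - 1/2 ≤ 0), abs_of_nonneg (by linarith : (0:ℝ) ≤ p - 1/2)]
        split_ifs <;> linarith
      · rw [abs_of_nonneg (by linarith : (0:ℝ) ≤ q - 1/2), abs_of_nonneg (by linarith : (0:ℝ) ≤ p - 1/2)]
        split_ifs <;> linarith

lemma pi_integral_prod {ι : Type*} [Fintype ι] (μ : Measure ℝ) [SigmaFinite μ]
    (f : ι → ℝ → ℝ) :
    ∫ x : ι → ℝ, ∏ i, f i (x i) ∂(Measure.pi fun _ => μ) = ∏ i, ∫ x, f i x ∂μ := by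
  letI : MeasureSpace ℝ := ⟨μ⟩
  exact integral_fintype_prod_eq_prod f

lemma pi_integrable_prod {ι : Type*} [Fintype ι] (μ : Measure ℝ) [SigmaFinite μ]
    (f : ι → ℝ → ℝ) (hf : ∀ i, Integrable (f i) μ) :
    Integrable (fun x : ι → ℝ => ∏ i, f i (x i)) (Measure.pi fun _ => μ) := by
  letI : MeasureSpace ℝ := ⟨μ⟩
  exact Integrable.fintype_prod hf

-- integrability of products over pi measure
lemma integrable_JJ {ι : Type*} [Fintype ι] (a b : ι → ℝ) :
    Integrable (fun x : ι → ℝ => ∏ l, (Jfun (a l) (x l) * Jfun (b l) (x l)))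
      (Measure.pi fun _ => volume.restrict (Icc (0:ℝ) 1)) := by
  refine pi_integrable_prod _ _ fun l => integrable_mu0
    ((measurable_Jfun _).mul (measurable_Jfun _)) 1 fun x _ => ?_
  rw [Pi.mul_apply, abs_mul]
  exact mul_le_one₀ (Jfun_abs_le _ x) (abs_nonneg _) (Jfun_abs_le _ x)

lemma integrable_JW {ι : Type*} [Fintype ι] (a : ι → ℝ) :
    Integrable (fun x : ι → ℝ => ∏ l, (Jfun (a l) (x l) * Wfun (x l)))
      (Measure.pi fun _ => volume.restrict (Icc (0:ℝ) 1)) := by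
  refine pi_integrable_prod _ _ fun l => integrable_mu0
    ((measurable_Jfun _).mul measurable_Wfun) 1 fun x hx => ?_
  rw [Pi.mul_apply, abs_mul]
  exact mul_le_one₀ (Jfun_abs_le _ x) (abs_nonneg _) (Wfun_abs_le hx)

lemma integrable_WW {ι : Type*} [Fintype ι] :
    Integrable (fun x : ι → ℝ => ∏ l, (Wfun (x l) * Wfun (x l)))
      (Measure.pi fun _ => volume.restrict (Icc (0:ℝ) 1)) := by
  refine pi_integrable_prod _ _ fun l => integrable_mu0
    (measurable_Wfun.mul measurable_Wfun) 1 fun x hx => ?_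
  rw [Pi.mul_apply, abs_mul]
  exact mul_le_one₀ (Wfun_abs_le hx) (abs_nonneg _) (Wfun_abs_le hx)

lemma integral_sq {ι : Type*} [Fintype ι] (n : ℕ) (Q : Fin n → ι → ℝ)
    (hQ : ∀ i l, Q i l ∈ Icc (0:ℝ) 1) :
    ∫ x : ι → ℝ, ((∑ i, ∏ l, Jfun (Q i l) (x l))/(n:ℝ) - ∏ l, Wfun (x l))^2
        ∂(Measure.pi fun _ => volume.restrict (Icc (0:ℝ) 1))
      = (1/(n:ℝ)^2) * ∑ i, ∑ j, ∏ l,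
            (|Q i l - 1/2|/2 + |Q j l - 1/2|/2 - |Q i l - Q j l|/2)
        - (2/(n:ℝ)) * ∑ i, ∏ l, (|Q i l - 1/2|/2 - |Q i l - 1/2|^2/2)
        + ∏ _l : ι, (1/12 : ℝ) := by
  have hpt : ∀ x : ι → ℝ,
      ((∑ i, ∏ l, Jfun (Q i l) (x l))/(n:ℝ) - ∏ l, Wfun (x l))^2
        = (1/(n:ℝ)^2) * ∑ i, ∑ j, ∏ l, (Jfun (Q i l) (x l) * Jfun (Q j l) (x l))
          - (2/(n:ℝ)) * ∑ i, ∏ l, (Jfun (Q i l) (x l) * Wfun (x l))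
          + ∏ l, (Wfun (x l) * Wfun (x l)) := by
    intro x
    have h1 : ∀ i j : Fin n, ∏ l, (Jfun (Q i l) (x l) * Jfun (Q j l) (x l))
        = (∏ l, Jfun (Q i l) (x l)) * ∏ l, Jfun (Q j l) (x l) := fun i j =>
      Finset.prod_mul_distrib
    have h2 : ∀ i : Fin n, ∏ l, (Jfun (Q i l) (x l) * Wfun (x l))
        = (∏ l, Jfun (Q i l) (x l)) * ∏ l, Wfun (x l) := fun i =>
      Finset.prod_mul_distrib
    have h3 : ∏ l, (Wfun (x l) * Wfun (x l))
        = (∏ l, Wfun (x l)) * ∏ l, Wfun (x l) := Finset.prod_mul_distrib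
    simp only [h1, h2, h3, ← Finset.sum_mul, ← Finset.mul_sum]
    ring
  simp only [hpt]
  have hA : Integrable (fun x : ι → ℝ =>
      (1/(n:ℝ)^2) * ∑ i, ∑ j, ∏ l, (Jfun (Q i l) (x l) * Jfun (Q j l) (x l)))
      (Measure.pi fun _ => volume.restrict (Icc (0:ℝ) 1)) :=
    (integrable_finset_sum _ fun i _ =>
      integrable_finset_sum _ fun j _ => integrable_JJ _ _).const_mul _
  have hB : Integrable (fun x : ι → ℝ =>
      (2/(n:ℝ)) * ∑ i, ∏ l, (Jfun (Q i l) (x l) * Wfun (x l)))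
      (Measure.pi fun _ => volume.restrict (Icc (0:ℝ) 1)) :=
    (integrable_finset_sum _ fun i _ => integrable_JW _).const_mul _
  have hAB : Integrable (fun x : ι → ℝ =>
      (1/(n:ℝ)^2) * ∑ i, ∑ j, ∏ l, (Jfun (Q i l) (x l) * Jfun (Q j l) (x l))
        - (2/(n:ℝ)) * ∑ i, ∏ l, (Jfun (Q i l) (x l) * Wfun (x l)))
      (Measure.pi fun _ => volume.restrict (Icc (0:ℝ) 1)) := hA.sub hB
  rw [integral_add hAB integrable_WW, integral_sub hA hB,
    MeasureTheory.integral_const_mul, MeasureTheory.integral_const_mul,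
    integral_finset_sum _ (fun i _ => integrable_finset_sum _ fun j _ => integrable_JJ _ _),
    integral_finset_sum _ (fun i _ => integrable_JW _)]
  simp only [integral_finset_sum _ (fun j _ => integrable_JJ _ _)]
  have eJJ : ∀ i j : Fin n,
      ∫ x : ι → ℝ, ∏ l, (Jfun (Q i l) (x l) * Jfun (Q j l) (x l))
          ∂(Measure.pi fun _ => volume.restrict (Icc (0:ℝ) 1))
        = ∏ l, (|Q i l - 1/2|/2 + |Q j l - 1/2|/2 - |Q i l - Q j l|/2) := by
    intro i j
    rw [pi_integral_prod _ fun l => fun y => Jfun (Q i l) y * Jfun (Q j l) y]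
    exact Finset.prod_congr rfl fun l _ => intJJ (hQ i l) (hQ j l)
  have eJW : ∀ i : Fin n,
      ∫ x : ι → ℝ, ∏ l, (Jfun (Q i l) (x l) * Wfun (x l))
          ∂(Measure.pi fun _ => volume.restrict (Icc (0:ℝ) 1))
        = ∏ l, (|Q i l - 1/2|/2 - |Q i l - 1/2|^2/2) := by
    intro i
    rw [pi_integral_prod _ fun l => fun y => Jfun (Q i l) y * Wfun y]
    exact Finset.prod_congr rfl fun l _ => intJW (hQ i l)
  have eWW : ∫ x : ι → ℝ, ∏ l, (Wfun (x l) * Wfun (x l))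
        ∂(Measure.pi fun _ => volume.restrict (Icc (0:ℝ) 1))
      = ∏ _l : ι, (1/12 : ℝ) := by
    rw [pi_integral_prod _ fun _ => fun y => Wfun y * Wfun y]
    exact Finset.prod_congr rfl fun l _ => intWW
  simp only [eJJ, eJW, eWW]

open scoped Classical in
lemma Wfun_eq {y : ℝ} (hy : y ∈ Icc (0:ℝ) 1) :
    |y - (if 1/2 < y then (1:ℝ) else 0)| = Wfun y := by
  unfold Wfun
  rcases le_or_gt y (1/2) with h | h
  · rw [if_neg (not_lt.2 h), if_pos h, sub_zero, abs_of_nonneg hy.1]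
  · rw [if_pos h, if_neg (not_le.2 h), abs_of_nonpos (by linarith [hy.2])]
    ring

open scoped Classical in
lemma Jfun_eq {p y : ℝ} (hp : p ∈ Icc (0:ℝ) 1) (hy : y ∈ Icc (0:ℝ) 1) :
    (if p ∈ Icc (min (if 1/2 < y then (1:ℝ) else 0) y)
        (max (if 1/2 < y then (1:ℝ) else 0) y) then (1:ℝ) else 0) = Jfun p y := by
  unfold Jfun
  rcases le_or_gt y (1/2) with h | h
  · rw [if_neg (not_lt.2 h), if_pos h]
    rw [min_eq_left hy.1, max_eq_right hy.1]
    by_cases hpy : p ≤ y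
    · rw [if_pos ⟨hp.1, hpy⟩, if_pos hpy]
    · rw [if_neg (fun hh => hpy hh.2), if_neg hpy]
  · rw [if_pos h, if_neg (not_le.2 h)]
    rw [min_eq_right hy.2, max_eq_left hy.2]
    by_cases hpy : y ≤ p
    · rw [if_pos ⟨hpy, hp.2⟩, if_pos hpy]
    · rw [if_neg (fun hh => hpy hh.1), if_neg hpy]

lemma sum_powerset_prod {s : ℕ} (f : Fin s → ℝ) :
    ∑ u ∈ (Finset.univ : Finset (Fin s)).powerset, ∏ l ∈ u, f l = ∏ l, (f l + 1) := by
  rw [Finset.prod_add]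
  exact Finset.sum_congr rfl fun u _ => by simp

lemma sum_filter_nonempty {s : ℕ} (g : Finset (Fin s) → ℝ) :
    ∑ u ∈ (Finset.univ : Finset (Fin s)).powerset.filter Finset.Nonempty, g u
      = (∑ u ∈ (Finset.univ : Finset (Fin s)).powerset, g u) - g ∅ := by
  classical
  have h := Finset.sum_filter_add_sum_filter_not
    (Finset.univ : Finset (Fin s)).powerset Finset.Nonempty g
  have h2 : (Finset.univ : Finset (Fin s)).powerset.filter (fun u => ¬u.Nonempty) = {∅} := by
    ext u
    simp [Finset.not_nonempty_iff_eq_empty]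
  rw [h2, Finset.sum_singleton] at h
  linarith

open scoped Classical in
/-- **Closed form of the centered `L₂` discrepancy** (Hickernell): the boxes are
anchored at the vertex `a(x)` of the unit cube nearest to `x` (`a_l = 1` if
`x_l > 1/2`, else `a_l = 0`), and the sum over all nonempty coordinate projections of
the integrated squared local discrepancy equals the stated closed form. -/
theorem centered_L2_discrepancy_formula (s n : ℕ) (hs : 1 ≤ s) (hn : 1 ≤ n)
    (P : Fin n → Fin s → ℝ) (hP : ∀ i l, P i l ∈ Set.Icc (0 : ℝ) 1) :
    (∑ u ∈ (Finset.univ : Finset (Fin s)).powerset.filter Finset.Nonempty,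
        ∫ xu : { l // l ∈ u } → ℝ,
          (((Finset.univ.filter fun i => ∀ l : { l // l ∈ u },
                P i l ∈ Set.Icc
                  (min (if 1 / 2 < xu l then (1 : ℝ) else 0) (xu l))
                  (max (if 1 / 2 < xu l then (1 : ℝ) else 0) (xu l))).card : ℝ) / n
              - ∏ l : { l // l ∈ u },
                  |xu l - (if 1 / 2 < xu l then (1 : ℝ) else 0)|) ^ 2
          ∂(Measure.pi fun _ : { l // l ∈ u } => volume.restrict (Set.Icc (0 : ℝ) 1)))
      = (13 / 12 : ℝ) ^ s
        - 2 / n * ∑ i, ∏ l, (1 + |P i l - 1 / 2| / 2 - |P i l - 1 / 2| ^ 2 / 2)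
        + 1 / (n : ℝ) ^ 2 * ∑ i, ∑ j, ∏ l,
            (1 + |P i l - 1 / 2| / 2 + |P j l - 1 / 2| / 2 - |P i l - P j l| / 2) := by
  have hn0 : (n : ℝ) ≠ 0 := Nat.cast_ne_zero.2 (by omega)
  -- Step 1: evaluate the integral for each u
  have per_u : ∀ u ∈ (Finset.univ : Finset (Fin s)).powerset.filter Finset.Nonempty,
      (∫ xu : { l // l ∈ u } → ℝ,
          (((Finset.univ.filter fun i => ∀ l : { l // l ∈ u },
                P i l ∈ Set.Icc
                  (min (if 1 / 2 < xu l then (1 : ℝ) else 0) (xu l))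
                  (max (if 1 / 2 < xu l then (1 : ℝ) else 0) (xu l))).card : ℝ) / n
              - ∏ l : { l // l ∈ u },
                  |xu l - (if 1 / 2 < xu l then (1 : ℝ) else 0)|) ^ 2
          ∂(Measure.pi fun _ : { l // l ∈ u } => volume.restrict (Set.Icc (0 : ℝ) 1)))
      = (1/(n:ℝ)^2) * ∑ i, ∑ j, ∏ l ∈ u,
            (|P i l - 1/2|/2 + |P j l - 1/2|/2 - |P i l - P j l|/2)
        - (2/(n:ℝ)) * ∑ i, ∏ l ∈ u, (|P i l - 1/2|/2 - |P i l - 1/2|^2/2)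
        + ∏ _l ∈ u, (1/12 : ℝ) := by
    intro u _
    have hae : ∀ᵐ xu : { l // l ∈ u } → ℝ
        ∂(Measure.pi fun _ : { l // l ∈ u } => volume.restrict (Set.Icc (0 : ℝ) 1)),
        ∀ l : { l // l ∈ u }, xu l ∈ Icc (0:ℝ) 1 := by
      rw [ae_all_iff]
      intro l
      exact (Measure.tendsto_eval_ae_ae).eventually (ae_restrict_mem measurableSet_Icc)
    have congr_step : ∀ xu : { l // l ∈ u } → ℝ, (∀ l, xu l ∈ Icc (0:ℝ) 1) →
        (((Finset.univ.filter fun i => ∀ l : { l // l ∈ u },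
                P i l ∈ Set.Icc
                  (min (if 1 / 2 < xu l then (1 : ℝ) else 0) (xu l))
                  (max (if 1 / 2 < xu l then (1 : ℝ) else 0) (xu l))).card : ℝ) / n
              - ∏ l : { l // l ∈ u },
                  |xu l - (if 1 / 2 < xu l then (1 : ℝ) else 0)|) ^ 2
        = ((∑ i, ∏ l : { l // l ∈ u }, Jfun (P i l) (xu l))/(n:ℝ)
            - ∏ l : { l // l ∈ u }, Wfun (xu l)) ^ 2 := by
      intro xu hxu
      congr 2
      · congr 1
        rw [Finset.card_filter]
        push_cast
        refine Finset.sum_congr rfl fun i _ => ?_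
        rw [← Fintype.prod_boole]
        exact Finset.prod_congr rfl fun l _ => (Jfun_eq (hP i l) (hxu l))
      · exact Finset.prod_congr rfl fun l _ => Wfun_eq (hxu l)
    rw [integral_congr_ae (by filter_upwards [hae] with xu hxu using congr_step xu hxu)]
    rw [integral_sq (ι := { l // l ∈ u }) n (fun i l => P i l.1) (fun i l => hP i l.1)]
    rw [Finset.prod_coe_sort u (fun l => (1/12:ℝ))]
    congr 1
    · congr 1
      · exact congrArg _ (Finset.sum_congr rfl fun i _ => Finset.sum_congr rfl fun j _ =>
          Finset.prod_coe_sort u (fun l => |P i l - 1/2|/2 + |P j l - 1/2|/2 - |P i l - P j l|/2))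
      · exact congrArg _ (Finset.sum_congr rfl fun i _ =>
          Finset.prod_coe_sort u (fun l => |P i l - 1/2|/2 - |P i l - 1/2|^2/2))
  rw [Finset.sum_congr rfl per_u, sum_filter_nonempty]
  -- empty-set term
  have hempty : ((1/(n:ℝ)^2) * ∑ i : Fin n, ∑ j : Fin n, ∏ l ∈ (∅ : Finset (Fin s)),
            (|P i l - 1/2|/2 + |P j l - 1/2|/2 - |P i l - P j l|/2)
        - (2/(n:ℝ)) * ∑ i : Fin n, ∏ l ∈ (∅ : Finset (Fin s)),
            (|P i l - 1/2|/2 - |P i l - 1/2|^2/2)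
        + ∏ _l ∈ (∅ : Finset (Fin s)), (1/12 : ℝ)) = 0 := by
    simp only [Finset.prod_empty, Finset.sum_const, Finset.card_univ, Fintype.card_fin,
      nsmul_eq_mul, mul_one]
    field_simp
    ring
  rw [hempty]
  -- distribute the sum over the powerset
  rw [Finset.sum_add_distrib, Finset.sum_sub_distrib]
  rw [← Finset.mul_sum, ← Finset.mul_sum, Finset.sum_comm]
  have e1 : (∑ y : Fin n, ∑ x ∈ (Finset.univ : Finset (Fin s)).powerset, ∑ j : Fin n,
        ∏ l ∈ x, (|P y l - 1/2|/2 + |P j l - 1/2|/2 - |P y l - P j l|/2))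
      = ∑ y : Fin n, ∑ j : Fin n, ∏ l : Fin s,
        (1 + |P y l - 1/2|/2 + |P j l - 1/2|/2 - |P y l - P j l|/2) := by
    refine Finset.sum_congr rfl fun y _ => ?_
    rw [Finset.sum_comm]
    refine Finset.sum_congr rfl fun j _ => ?_
    rw [sum_powerset_prod]
    exact Finset.prod_congr rfl fun l _ => by ring
  have e2 : (∑ x ∈ (Finset.univ : Finset (Fin s)).powerset, ∑ i : Fin n,
        ∏ l ∈ x, (|P i l - 1/2|/2 - |P i l - 1/2|^2/2))
      = ∑ i : Fin n, ∏ l : Fin s, (1 + |P i l - 1/2|/2 - |P i l - 1/2|^2/2) := by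
    rw [Finset.sum_comm]
    refine Finset.sum_congr rfl fun i _ => ?_
    rw [sum_powerset_prod]
    exact Finset.prod_congr rfl fun l _ => by ring
  have e3 : (∑ x ∈ (Finset.univ : Finset (Fin s)).powerset, ∏ _l ∈ x, (1/12:ℝ))
      = (13/12 : ℝ)^s := by
    rw [sum_powerset_prod, Finset.prod_const, Finset.card_univ, Fintype.card_fin]
    norm_num
  rw [e1, e2, e3]
  ring
end
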